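/- Let A be the two-dimensional commutative ℂ-algebra spanned by the unit 1 and an idempotent v (v² = v), let α ∈ ℂ with α ≠ −1, and define Δ : A → A ⊗ A by Δ(1) = 1 ⊗ 1 and Δ(v) = v ⊗ 1 + 1 ⊗ v + α·(v ⊗ v). Then Δ is coassociative, the map ε given by ε(1) = 1, ε(v) = 0 is a counit and an algebra homomorphism, and the functional φ given by φ(v) = 1, φ(1) = −α is a faithful left invariant functional, so that (A, Δ) is a finite quantum hypergroup (with antipode the identity map). -/
import Mathlib


open TensorProduct

noncomputable section

/-- The two-dimensional commutative algebra `ℂ × ℂ`, spanned by its unit `1 = (1,1)`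
and the idempotent `v = (1,0)`. -/
abbrev A2 : Type := ℂ × ℂ

/-- The idempotent `v`. -/
def vA : A2 := (1, 0)

/-- `Δ(v) = v ⊗ 1 + 1 ⊗ v + α • (v ⊗ v)`. -/
def Dv (α : ℂ) : A2 ⊗[ℂ] A2 :=
  vA ⊗ₜ[ℂ] (1 : A2) + (1 : A2) ⊗ₜ[ℂ] vA + α • (vA ⊗ₜ[ℂ] vA)

/-- The coproduct on `A2`, the unique linear map with `Δ 1 = 1 ⊗ 1` and
`Δ v = v ⊗ 1 + 1 ⊗ v + α • (v ⊗ v)`. -/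
def Δ2 (α : ℂ) : A2 →ₗ[ℂ] A2 ⊗[ℂ] A2 where
  toFun x := x.1 • Dv α + x.2 • ((1 : A2) ⊗ₜ[ℂ] (1 : A2) - Dv α)
  map_add' x y := by
    simp only [Prod.fst_add, Prod.snd_add, add_smul]
    abel
  map_smul' c x := by
    simp only [Prod.smul_fst, Prod.smul_snd, smul_eq_mul, mul_smul, RingHom.id_apply,
      smul_add]

/-- The counit `ε` with `ε 1 = 1`, `ε v = 0`. -/
def ε2 : A2 →ₗ[ℂ] ℂ := LinearMap.snd ℂ ℂ ℂ

/-- The functional `φ` with `φ v = 1`, `φ 1 = -α`. -/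
def φ2 (α : ℂ) : A2 →ₗ[ℂ] ℂ where
  toFun x := x.1 - (α + 1) * x.2
  map_add' x y := by simp; ring
  map_smul' c x := by simp; ring

/-- `(ε ⊗ ι)` as a map. -/
def lmapC (ε : A2 →ₗ[ℂ] ℂ) : A2 ⊗[ℂ] A2 →ₗ[ℂ] A2 :=
  (TensorProduct.lid ℂ A2).toLinearMap ∘ₗ TensorProduct.map ε LinearMap.id

/-- `(ι ⊗ ε)` as a map. -/
def rmapC (ε : A2 →ₗ[ℂ] ℂ) : A2 ⊗[ℂ] A2 →ₗ[ℂ] A2 :=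
  (TensorProduct.rid ℂ A2).toLinearMap ∘ₗ TensorProduct.map LinearMap.id ε

lemma Δ2_apply (α : ℂ) (x : A2) :
    Δ2 α x = x.1 • Dv α + x.2 • ((1 : A2) ⊗ₜ[ℂ] (1 : A2) - Dv α) := rfl

lemma φ2_apply (α : ℂ) (x : A2) : φ2 α x = x.1 - (α + 1) * x.2 := rfl

lemma Δ2_one (α : ℂ) : Δ2 α 1 = (1 : A2) ⊗ₜ[ℂ] (1 : A2) := by
  simp [Δ2_apply, Prod.fst_one, Prod.snd_one]

lemma Δ2_v (α : ℂ) : Δ2 α vA = Dv α := by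
  simp [Δ2_apply, vA]

lemma rmapC_tmul (f : A2 →ₗ[ℂ] ℂ) (x y : A2) :
    rmapC f (x ⊗ₜ[ℂ] y) = f y • x := by
  simp [rmapC]

lemma lmapC_tmul (f : A2 →ₗ[ℂ] ℂ) (x y : A2) :
    lmapC f (x ⊗ₜ[ℂ] y) = f x • y := by
  simp [lmapC]

lemma coassoc_Dv (α : ℂ) :
    (TensorProduct.assoc ℂ A2 A2 A2)
        (TensorProduct.map (Δ2 α) LinearMap.id (Dv α)) =
      TensorProduct.map LinearMap.id (Δ2 α) (Dv α) := by
  simp only [Dv, map_add, LinearMapClass.map_smul, TensorProduct.map_tmul,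
    LinearMap.id_apply]
  simp only [Δ2_v, Δ2_one, Dv]
  simp only [TensorProduct.add_tmul, TensorProduct.tmul_add, TensorProduct.smul_tmul,
    TensorProduct.tmul_smul, map_add, LinearMapClass.map_smul, TensorProduct.assoc_tmul]
  module

lemma coassoc_one (α : ℂ) :
    (TensorProduct.assoc ℂ A2 A2 A2)
        (TensorProduct.map (Δ2 α) LinearMap.id ((1 : A2) ⊗ₜ[ℂ] (1 : A2))) =
      TensorProduct.map LinearMap.id (Δ2 α) ((1 : A2) ⊗ₜ[ℂ] (1 : A2)) := by
  simp only [TensorProduct.map_tmul, LinearMap.id_apply, Δ2_one, TensorProduct.assoc_tmul]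

/-- For `α ≠ -1`, the algebra `A2 = ℂ × ℂ` with the coproduct `Δ2 α`
is a finite quantum hypergroup: `Δ2 α` is unital and coassociative, `ε2` is a
counit and an algebra homomorphism, and `φ2 α` is a faithful left invariant
functional which is a left integral with antipode the identity map (an
anti-isomorphism since `A2` is commutative). -/
theorem two_dim_quantum_hypergroup (α : ℂ) (hα : α ≠ -1) :
    -- v is an idempotent and {1, v} spans A2
    (vA * vA = vA) ∧
    (∀ x : A2, ∃ c d : ℂ, x = c • (1 : A2) + d • vA) ∧
    -- Δ is unital with the prescribed value on v
    (Δ2 α 1 = (1 : A2) ⊗ₜ[ℂ] (1 : A2)) ∧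
    (Δ2 α vA = vA ⊗ₜ[ℂ] (1 : A2) + (1 : A2) ⊗ₜ[ℂ] vA + α • (vA ⊗ₜ[ℂ] vA)) ∧
    -- coassociativity
    (∀ a : A2,
      (TensorProduct.assoc ℂ A2 A2 A2)
          (TensorProduct.map (Δ2 α) LinearMap.id (Δ2 α a)) =
        TensorProduct.map LinearMap.id (Δ2 α) (Δ2 α a)) ∧
    -- ε2 is a counit and an algebra homomorphism
    (∀ a : A2, lmapC ε2 (Δ2 α a) = a) ∧
    (∀ a : A2, rmapC ε2 (Δ2 α a) = a) ∧
    (∀ x y : A2, ε2 (x * y) = ε2 x * ε2 y) ∧ (ε2 (1 : A2) = 1) ∧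
    -- values of φ2
    (φ2 α vA = 1) ∧ (φ2 α (1 : A2) = -α) ∧
    -- φ2 is faithful
    (∀ a : A2, (∀ c : A2, φ2 α (a * c) = 0) → a = 0) ∧
    -- φ2 is left invariant
    (∀ a : A2, rmapC (φ2 α) (Δ2 α a) = φ2 α a • (1 : A2)) ∧
    -- φ2 is a left integral with antipode the identity map
    (∀ a c : A2,
      rmapC (φ2 α) (Δ2 α a * ((1 : A2) ⊗ₜ[ℂ] c)) =
        rmapC (φ2 α) (((1 : A2) ⊗ₜ[ℂ] a) * Δ2 α c)) := by
  have hα' : α + 1 ≠ 0 := fun h => hα (by linear_combination h)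
  refine ⟨?_, ?_, Δ2_one α, Δ2_v α, ?_, ?_, ?_, ?_, ?_, ?_, ?_, ?_, ?_, ?_⟩
  · ext <;> simp [vA]
  · intro x
    exact ⟨x.2, x.1 - x.2, by ext <;> simp [vA]⟩
  · intro a
    rw [Δ2_apply]
    simp only [map_add, map_smul, map_sub, coassoc_Dv, coassoc_one]
  · intro a
    simp only [Δ2_apply, map_add, map_smul, map_sub, Dv, lmapC_tmul,
      TensorProduct.tmul_smul, TensorProduct.smul_tmul', LinearMapClass.map_smul]
    have h1 : ε2 (1 : A2) = 1 := rfl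
    have hv : ε2 vA = 0 := rfl
    rw [h1, hv]
    ext <;> simp [vA]
  · intro a
    simp only [Δ2_apply, map_add, map_smul, map_sub, Dv, rmapC_tmul,
      TensorProduct.tmul_smul, TensorProduct.smul_tmul', LinearMapClass.map_smul]
    have h1 : ε2 (1 : A2) = 1 := rfl
    have hv : ε2 vA = 0 := rfl
    rw [h1, hv]
    ext <;> simp [vA]
  · intro x y; simp [ε2]
  · rfl
  · simp [φ2_apply, vA]
  · simp [φ2_apply]
  · intro a h
    have h1 := h 1
    have h2 := h vA
    simp only [mul_one, φ2_apply] at h1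
    have h2' : a.1 = 0 := by
      simpa [φ2_apply, vA, Prod.fst_mul, Prod.snd_mul] using h2
    have : (α + 1) * a.2 = 0 := by linear_combination h2' - h1
    ext
    · exact h2'
    · exact (mul_eq_zero.mp this).resolve_left hα'
  · intro a
    simp only [Δ2_apply, map_add, map_smul, map_sub, Dv, rmapC_tmul,
      TensorProduct.tmul_smul, TensorProduct.smul_tmul', LinearMapClass.map_smul,
      φ2_apply, vA]
    ext <;> simp <;> ring
  · intro a c
    have hvv : vA * vA = vA := by ext <;> simp [vA]
    simp only [Δ2_apply, Dv, add_mul, sub_mul, mul_add, mul_sub, smul_mul_assoc,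
      mul_smul_comm, Algebra.TensorProduct.tmul_mul_tmul, one_mul, mul_one, hvv,
      map_add, map_sub, map_smul, rmapC_tmul, φ2_apply, LinearMapClass.map_smul,
      vA, Prod.fst_mul, Prod.snd_mul, Prod.fst_one, Prod.snd_one]
    ext <;> simp <;> ring

end
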